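/- arXiv:2406.00499 — 4 statements merged into one kernel-verified Lean document; each statement's English description precedes it below -/
import Mathlib

section
/- Let γ > 0 be a real constant and let X = ℝⁿ \ {0}. The Gaussian Cosine kernel k_GC(x,y) = exp(−γ·(1 − ⟨x,y⟩/(‖x‖·‖y‖))) is a Mercer kernel on X. -/
open scoped RealInnerProductSpace

lemma exp_tsum (t : ℝ) : Real.exp t = ∑' k : ℕ, t ^ k / k.factorial := by
  rw [Real.exp_eq_exp_ℝ, NormedSpace.exp_eq_tsum (𝕂 := ℝ)]
  simp [smul_eq_mul, div_eq_inv_mul]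

lemma gram_pow_nonneg {m n k : ℕ} (w : Fin m → EuclideanSpace ℝ (Fin n))
    (c : Fin m → ℝ) : 0 ≤ ∑ i, ∑ j, c i * c j * ⟪w i, w j⟫ ^ k := by
  have hinner : ∀ i j : Fin m, ⟪w i, w j⟫ ^ k
      = ∑ f : Fin k → Fin n, (∏ t, w i (f t)) * (∏ t, w j (f t)) := by
    intro i j
    have h1 : ⟪w i, w j⟫ = ∑ a, w i a * w j a := by
      simp [PiLp.inner_apply, RCLike.inner_apply, mul_comm]
    have h2 : (∑ a, w i a * w j a) ^ k = ∏ _t : Fin k, ∑ a, w i a * w j a := by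
      simp [Finset.prod_const]
    rw [h1, h2, Finset.prod_univ_sum]
    simp [Finset.prod_mul_distrib, Fintype.piFinset_univ]
  calc (0:ℝ) ≤ ∑ f : Fin k → Fin n, (∑ i, c i * ∏ t, w i (f t)) ^ 2 :=
        Finset.sum_nonneg fun _ _ => sq_nonneg _
    _ = ∑ f : Fin k → Fin n, ∑ i, ∑ j,
          (c i * ∏ t, w i (f t)) * (c j * ∏ t, w j (f t)) := by
        refine Finset.sum_congr rfl fun f _ => ?_
        rw [sq, Finset.sum_mul_sum]
    _ = ∑ i, ∑ j, ∑ f : Fin k → Fin n,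
          (c i * ∏ t, w i (f t)) * (c j * ∏ t, w j (f t)) := by
        rw [Finset.sum_comm]
        exact Finset.sum_congr rfl fun i _ => Finset.sum_comm
    _ = ∑ i, ∑ j, c i * c j * ⟪w i, w j⟫ ^ k := by
        refine Finset.sum_congr rfl fun i _ => Finset.sum_congr rfl fun j _ => ?_
        rw [hinner, Finset.mul_sum]
        exact Finset.sum_congr rfl fun f _ => by ring

/-- A function `k : X × X → ℝ` on a set `X ⊆ ℝⁿ` is a Mercer kernel if it is
symmetric on `X` and every Gram matrix built from a finite sequence of points of
`X` is positive semidefinite. -/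
def IsMercerKernel {n : ℕ} (X : Set (EuclideanSpace ℝ (Fin n)))
    (k : EuclideanSpace ℝ (Fin n) → EuclideanSpace ℝ (Fin n) → ℝ) : Prop :=
  (∀ x ∈ X, ∀ y ∈ X, k x y = k y x) ∧
  ∀ (m : ℕ) (x : Fin m → EuclideanSpace ℝ (Fin n)), (∀ i, x i ∈ X) →
    (Matrix.of fun i j => k (x i) (x j)).PosSemidef

/-- The Gaussian Cosine kernel
`k_GC(x,y) = exp (−γ (1 − ⟨x,y⟩ / (‖x‖‖y‖)))`, `γ > 0`, is a Mercer kernel on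
`ℝⁿ \ {0}`. -/
theorem isMercerKernel_gaussianCosine {n : ℕ} (γ : ℝ) (hγ : 0 < γ) :
    IsMercerKernel {x : EuclideanSpace ℝ (Fin n) | x ≠ 0}
      (fun x y => Real.exp (-γ * (1 - ⟪x, y⟫ / (‖x‖ * ‖y‖)))) := by
  constructor
  · intro x _ y _
    simp only [real_inner_comm x y, mul_comm ‖x‖ ‖y‖]
  · intro m x hx
    set u : Fin m → EuclideanSpace ℝ (Fin n) :=
      fun i => (Real.sqrt γ * ‖x i‖⁻¹) • x i with hu
    have hs : Real.sqrt γ * Real.sqrt γ = γ := Real.mul_self_sqrt hγ.le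
    have hip : ∀ i j, ⟪u i, u j⟫ = γ * (⟪x i, x j⟫ / (‖x i‖ * ‖x j‖)) := by
      intro i j
      rw [hu]
      rw [real_inner_smul_left, real_inner_smul_right, div_eq_mul_inv, mul_inv]
      linear_combination (⟪x i, x j⟫ * ‖x i‖⁻¹ * ‖x j‖⁻¹) * hs
    have hmat : ∀ i j, Real.exp (-γ * (1 - ⟪x i, x j⟫ / (‖x i‖ * ‖x j‖)))
        = Real.exp (-γ) * Real.exp ⟪u i, u j⟫ := by
      intro i j
      rw [← Real.exp_add]
      congr 1
      rw [hip]
      ring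
    refine Matrix.PosSemidef.of_dotProduct_mulVec_nonneg ?_ ?_
    · show _ = _
      ext i j
      simp only [Matrix.conjTranspose_apply, Matrix.of_apply, star, real_inner_comm (x j),
        mul_comm ‖x j‖ ‖x i‖]
    · intro c
      set S : Fin m → Fin m → ℕ → ℝ :=
        fun i j k => c i * c j * Real.exp (-γ) * (⟪u i, u j⟫ ^ k / k.factorial) with hSdef
      have hS : ∀ i j : Fin m, Summable (S i j) := fun i j =>
        (Real.summable_pow_div_factorial _).mul_left _
      have expand : dotProduct (star c)
          ((Matrix.of fun i j => Real.exp (-γ * (1 - ⟪x i, x j⟫ / (‖x i‖ * ‖x j‖)))) |>.mulVec c)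
          = ∑ i, ∑ j, ∑' k, S i j k := by
        simp only [dotProduct, Matrix.mulVec, Matrix.of_apply, Pi.star_apply, star, id_eq,
          Finset.mul_sum]
        refine Finset.sum_congr rfl fun i _ => Finset.sum_congr rfl fun j _ => ?_
        rw [hSdef]
        simp only
        rw [tsum_mul_left, ← exp_tsum, hmat]
        ring
      rw [expand]
      have step1 : ∑ i, ∑ j, ∑' k, S i j k = ∑' k, ∑ i, ∑ j, S i j k := by
        calc ∑ i, ∑ j, ∑' k, S i j k
            = ∑ i, ∑' k, ∑ j, S i j k :=
              Finset.sum_congr rfl fun i _ => (Summable.tsum_finsetSum fun j _ => hS i j).symm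
          _ = ∑' k, ∑ i, ∑ j, S i j k :=
              (Summable.tsum_finsetSum fun i _ => (hasSum_sum fun j _ => (hS i j).hasSum).summable).symm
      rw [step1]
      refine tsum_nonneg fun k => ?_
      have : ∑ i, ∑ j, S i j k
          = (Real.exp (-γ) / k.factorial) * ∑ i, ∑ j, c i * c j * ⟪u i, u j⟫ ^ k := by
        simp only [Finset.mul_sum]
        refine Finset.sum_congr rfl fun i _ => Finset.sum_congr rfl fun j _ => ?_
        rw [hSdef]; ring
      rw [this]
      exact mul_nonneg (div_nonneg (Real.exp_pos _).le (Nat.cast_nonneg _))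
        (gram_pow_nonneg u c)
end

section
/- Let γ > 0 and let k_GC(x,y) = exp(−γ·(1 − ⟨x,y⟩/(‖x‖·‖y‖))) on nonzero vectors of ℝⁿ. The Riemannian metric induced by k_GC, given by g_ij(x) = ∂²k_GC(x,y)/∂x_i ∂y_j |_{y=x}, exists and equals g_ij(x) = (γ/‖x‖²)·(δ_ij − x_i·x_j/‖x‖²) for every nonzero x ∈ ℝⁿ and all indices i, j; in particular, for unit vectors ‖x‖ = 1 it equals γ·(δ_ij − x_i·x_j). -/
open scoped RealInnerProductSpace

/-- The Gaussian Cosine kernel `k_GC(x,y) = exp (−γ (1 − ⟨x,y⟩ / (‖x‖‖y‖)))`. -/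
noncomputable def kGC {n : ℕ} (γ : ℝ) (x y : EuclideanSpace ℝ (Fin n)) : ℝ :=
  Real.exp (-γ * (1 - ⟪x, y⟫ / (‖x‖ * ‖y‖)))

lemma kGC_expand {n : ℕ} (γ : ℝ) (x : EuclideanSpace ℝ (Fin n)) (i j : Fin n) (t s : ℝ) :
    kGC γ (x + t • EuclideanSpace.single i (1 : ℝ)) (x + s • EuclideanSpace.single j (1 : ℝ)) =
    Real.exp (-γ * (1 - (‖x‖^2 + t * x i + s * x j + t * s * (if i = j then (1:ℝ) else 0)) /
      (Real.sqrt (‖x‖^2 + 2*t*(x i) + t^2) * Real.sqrt (‖x‖^2 + 2*s*(x j) + s^2)))) := by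
  have hsum : (∑ l, x l * x l) = ‖x‖^2 := by
    rw [← real_inner_self_eq_norm_sq]; simp [PiLp.inner_apply]
    rw [EuclideanSpace.norm_eq, Real.sq_sqrt (Finset.sum_nonneg fun _ _ => sq_nonneg _)]
    exact Finset.sum_congr rfl fun l _ => by rw [Real.norm_eq_abs, sq_abs, sq]
  have hnorm : ∀ (k : Fin n) (r : ℝ), ‖x + r • EuclideanSpace.single k (1:ℝ)‖
      = Real.sqrt (‖x‖^2 + 2*r*(x k) + r^2) := by
    intro k r
    rw [@norm_eq_sqrt_real_inner]
    congr 1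
    simp [inner_add_add_self, real_inner_smul_left, real_inner_smul_right,
      EuclideanSpace.inner_single_right, EuclideanSpace.inner_single_left]
    rw [norm_add_sq_real, norm_smul, EuclideanSpace.norm_single, real_inner_smul_right,
      EuclideanSpace.inner_single_right]
    simp; ring
  have hinner : ⟪x + t • EuclideanSpace.single i (1:ℝ), x + s • EuclideanSpace.single j (1:ℝ)⟫
      = ‖x‖^2 + t * x i + s * x j + t * s * (if i = j then (1:ℝ) else 0) := by
    simp [inner_add_add_self, inner_add_left, inner_add_right, real_inner_smul_left,
      real_inner_smul_right, EuclideanSpace.inner_single_right, EuclideanSpace.inner_single_left,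
      EuclideanSpace.single_apply]
    by_cases h : i = j
    · subst h; simp; ring
    · simp [h, Ne.symm h]
  rw [kGC, hinner, hnorm, hnorm]

lemma scalar_inner (γ xi xj d r : ℝ) (hr : 0 < r) (s : ℝ)
    (hB : 0 < r^2 + 2*s*xj + s^2) :
    HasDerivAt (fun t : ℝ => Real.exp (-γ * (1 -
        (r^2 + t*xi + s*xj + t*s*d) /
        (Real.sqrt (r^2 + 2*t*xi + t^2) * Real.sqrt (r^2 + 2*s*xj + s^2)))))
      (γ * (s*(d*r^2 - xi*xj)) / (r^3 * Real.sqrt (r^2 + 2*s*xj + s^2)) *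
        Real.exp (-γ * (1 - (r^2 + s*xj)/(r * Real.sqrt (r^2 + 2*s*xj + s^2))))) 0 := by
  set w := Real.sqrt (r^2 + 2*s*xj + s^2) with hw
  have hw0 : 0 < w := Real.sqrt_pos.2 hB
  have h00 : r^2 + 2*(0:ℝ)*xi + 0^2 = r^2 := by norm_num
  have hA : HasDerivAt (fun t : ℝ => r^2 + 2*t*xi + t^2) (2*xi) 0 := by
    have h := ((((hasDerivAt_id (0:ℝ)).const_mul 2).mul_const xi).const_add (r^2)).add
      (hasDerivAt_pow 2 (0:ℝ))
    simpa [Pi.add_def] using h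
  have hsq : HasDerivAt (fun t : ℝ => Real.sqrt (r^2 + 2*t*xi + t^2)) (2*xi/(2*r)) 0 := by
    have h := hA.sqrt (by simp only [h00]; positivity)
    simp only [h00, Real.sqrt_sq hr.le] at h
    exact h
  have hQ : HasDerivAt (fun t : ℝ => Real.sqrt (r^2 + 2*t*xi + t^2) * w) (2*xi/(2*r)*w) 0 :=
    hsq.mul_const w
  have hP : HasDerivAt (fun t : ℝ => r^2 + t*xi + s*xj + t*s*d) (xi + s*d) 0 := by
    have h := ((((hasDerivAt_id (0:ℝ)).mul_const xi).const_add (r^2)).add_const (s*xj)).add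
      ((hasDerivAt_id (0:ℝ)).mul_const (s*d))
    simpa [mul_assoc, Pi.add_def] using h
  have hQne : (fun t : ℝ => Real.sqrt (r^2 + 2*t*xi + t^2) * w) 0 ≠ 0 := by
    simp only [h00, Real.sqrt_sq hr.le]; positivity
  have hdiv := hP.div hQ hQne
  have hfull := ((hdiv.const_sub 1).const_mul (-γ)).exp
  refine hfull.congr_deriv ?_
  simp only [Pi.div_apply]
  norm_num [h00, Real.sqrt_sq hr.le]
  field_simp
  ring

lemma scalar_outer (γ xi xj d r : ℝ) (hr : 0 < r) :
    HasDerivAt (fun s : ℝ =>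
        γ * (s*(d*r^2 - xi*xj)) / (r^3 * Real.sqrt (r^2 + 2*s*xj + s^2)) *
        Real.exp (-γ * (1 - (r^2 + s*xj)/(r * Real.sqrt (r^2 + 2*s*xj + s^2)))))
      (γ / r^2 * (d - xi*xj/r^2)) 0 := by
  set H : ℝ → ℝ := fun s =>
    γ * (d*r^2 - xi*xj) / (r^3 * Real.sqrt (r^2 + 2*s*xj + s^2)) *
      Real.exp (-γ * (1 - (r^2 + s*xj)/(r * Real.sqrt (r^2 + 2*s*xj + s^2)))) with hH
  have h00 : r^2 + 2*(0:ℝ)*xj + 0^2 = r^2 := by norm_num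
  have hBdiff : DifferentiableAt ℝ (fun s : ℝ => r^2 + 2*s*xj + s^2) 0 := by
    fun_prop
  have hsqdiff : DifferentiableAt ℝ (fun s : ℝ => Real.sqrt (r^2 + 2*s*xj + s^2)) 0 := by
    apply DifferentiableAt.sqrt hBdiff
    simp only [h00]; positivity
  have hsq0 : Real.sqrt (r^2 + 2*(0:ℝ)*xj + 0^2) = r := by
    rw [h00, Real.sqrt_sq hr.le]
  have hden1 : r^3 * Real.sqrt (r^2 + 2*(0:ℝ)*xj + 0^2) ≠ 0 := by
    rw [hsq0]; positivity
  have hden2 : r * Real.sqrt (r^2 + 2*(0:ℝ)*xj + 0^2) ≠ 0 := by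
    rw [hsq0]; positivity
  have hHdiff : DifferentiableAt ℝ H 0 := by
    apply DifferentiableAt.mul
    · exact (differentiableAt_const _).div ((differentiableAt_const _).mul hsqdiff) hden1
    · apply DifferentiableAt.exp
      apply DifferentiableAt.const_mul
      apply DifferentiableAt.const_sub
      exact (by fun_prop : DifferentiableAt ℝ (fun s : ℝ => r^2 + s*xj) 0).div
        ((differentiableAt_const _).mul hsqdiff) hden2
  have hmul := (hasDerivAt_id (0:ℝ)).mul hHdiff.hasDerivAt
  have heq : (fun s : ℝ => id s * H s) = (fun s : ℝ =>
      γ * (s*(d*r^2 - xi*xj)) / (r^3 * Real.sqrt (r^2 + 2*s*xj + s^2)) *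
        Real.exp (-γ * (1 - (r^2 + s*xj)/(r * Real.sqrt (r^2 + 2*s*xj + s^2))))) := by
    funext s; simp only [hH, id]; ring
  rw [show id * H = (fun s : ℝ => id s * H s) from rfl, heq] at hmul
  refine hmul.congr_deriv ?_
  have hH0 : H 0 = γ / r^2 * (d - xi*xj/r^2) := by
    have e0 : H 0 = γ*(d*r^2-xi*xj)/(r^3*r) * Real.exp (-γ*(1 - (r^2+0*xj)/(r*r))) := by
      simp only [hH, hsq0]
    rw [e0, show (r^2+0*xj)/(r*r) = (1:ℝ) by field_simp; ring, sub_self, mul_zero,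
      Real.exp_zero, mul_one]
    field_simp
  simp [hH0]

/-- The Riemannian metric induced by the Gaussian Cosine kernel,
`g_ij(x) = ∂²k_GC(x,y)/∂x_i∂y_j |_{y=x}`, exists and equals
`(γ/‖x‖²)(δ_ij − x_i x_j/‖x‖²)` for every nonzero `x`; in particular for unit
vectors it equals `γ(δ_ij − x_i x_j)`. -/
theorem gaussianCosine_inducedMetric {n : ℕ} (γ : ℝ) (hγ : 0 < γ)
    (x : EuclideanSpace ℝ (Fin n)) (hx : x ≠ 0) (i j : Fin n) :
    HasDerivAt
      (fun s : ℝ =>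
        deriv (fun t : ℝ =>
          kGC γ (x + t • EuclideanSpace.single i (1 : ℝ))
            (x + s • EuclideanSpace.single j (1 : ℝ))) 0)
      (γ / ‖x‖ ^ 2 * ((if i = j then (1 : ℝ) else 0) - x i * x j / ‖x‖ ^ 2)) 0 ∧
    (‖x‖ = 1 →
      γ / ‖x‖ ^ 2 * ((if i = j then (1 : ℝ) else 0) - x i * x j / ‖x‖ ^ 2) =
        γ * ((if i = j then (1 : ℝ) else 0) - x i * x j)) := by
  have hr : 0 < ‖x‖ := norm_pos_iff.2 hx
  constructor
  · have hG := scalar_outer γ (x i) (x j) (if i = j then (1:ℝ) else 0) ‖x‖ hr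
    apply hG.congr_of_eventuallyEq
    have hc : ContinuousAt (fun s : ℝ => ‖x‖^2 + 2*s*(x j) + s^2) 0 := by fun_prop
    have h0 : (0:ℝ) < ‖x‖^2 + 2*(0:ℝ)*(x j) + 0^2 := by norm_num; positivity
    have hev : ∀ᶠ s in nhds (0:ℝ), 0 < ‖x‖^2 + 2*s*(x j) + s^2 :=
      hc.eventually (eventually_gt_nhds h0)
    filter_upwards [hev] with s hBs
    have hfun : (fun t : ℝ => kGC γ (x + t • EuclideanSpace.single i (1 : ℝ))
        (x + s • EuclideanSpace.single j (1 : ℝ))) =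
        (fun t : ℝ => Real.exp (-γ * (1 -
          (‖x‖^2 + t * x i + s * x j + t * s * (if i = j then (1:ℝ) else 0)) /
          (Real.sqrt (‖x‖^2 + 2*t*(x i) + t^2) * Real.sqrt (‖x‖^2 + 2*s*(x j) + s^2))))) :=
      funext fun t => kGC_expand γ x i j t s
    rw [hfun, (scalar_inner γ (x i) (x j) (if i = j then (1:ℝ) else 0) ‖x‖ hr s hBs).deriv]
  · intro h
    rw [h]
    norm_num
end

section
/- Let X ⊆ ℝⁿ be open, let k : X × X → ℝ be a symmetric C² kernel, and let D : X → ℝ be C¹. Define the conformally transformed kernel k̃(x,y) = D(x)·D(y)·k(x,y), the induced metric g_ij(x) = ∂²k(x,y)/∂x_i ∂y_j |_{y=x}, the derivatives D_i(x) = ∂D/∂x_i (x), and k_i(x,x) = ∂k(x,y)/∂x_i |_{y=x}. Then the metric induced by k̃ satisfies, for all x ∈ X and all indices i, j: g̃_ij(x) = D(x)²·g_ij(x) + D_i(x)·D_j(x)·k(x,x) + D(x)·(D_i(x)·k_j(x,x) + D_j(x)·k_i(x,x)). -/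
/-- Partial derivative of a two-variable kernel with respect to the `i`-th
coordinate of the first argument: `∂k(x,y)/∂x_i`. -/
noncomputable def pderivFst {n : ℕ} (k : (Fin n → ℝ) → (Fin n → ℝ) → ℝ)
    (i : Fin n) (x y : Fin n → ℝ) : ℝ :=
  deriv (fun t : ℝ => k (x + t • (Pi.single i 1 : Fin n → ℝ)) y) 0

/-- Partial derivative of a scalar function: `D_i(x) = ∂D(x)/∂x_i`. -/
noncomputable def pderiv' {n : ℕ} (D : (Fin n → ℝ) → ℝ) (i : Fin n)
    (x : Fin n → ℝ) : ℝ :=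
  deriv (fun t : ℝ => D (x + t • (Pi.single i 1 : Fin n → ℝ))) 0

/-- The Riemannian metric induced by a kernel `k`:
`g_ij(x) = ∂²k(x,y)/∂x_i∂y_j` evaluated at `y = x`. -/
noncomputable def inducedMetric {n : ℕ} (k : (Fin n → ℝ) → (Fin n → ℝ) → ℝ)
    (i j : Fin n) (x : Fin n → ℝ) : ℝ :=
  deriv (fun s : ℝ => pderivFst k i x (x + s • (Pi.single j 1 : Fin n → ℝ))) 0

/-- For a symmetric `C²` kernel `k` on an open set `X ⊆ ℝⁿ` and a
`C¹` function `D`, the metric induced by the conformally transformed kernel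
`k̃(x,y) = D(x)D(y)k(x,y)` satisfies
`g̃_ij(x) = D(x)²g_ij(x) + D_i(x)D_j(x)k(x,x) + D(x)(D_i(x)k_j(x,x) + D_j(x)k_i(x,x))`. -/
theorem conformal_inducedMetric {n : ℕ} (X : Set (Fin n → ℝ)) (hX : IsOpen X)
    (k : (Fin n → ℝ) → (Fin n → ℝ) → ℝ) (D : (Fin n → ℝ) → ℝ)
    (hsymm : ∀ x ∈ X, ∀ y ∈ X, k x y = k y x)
    (hk : ContDiffOn ℝ 2 (fun p : (Fin n → ℝ) × (Fin n → ℝ) => k p.1 p.2) (X ×ˢ X))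
    (hD : ContDiffOn ℝ 1 D X) (x : Fin n → ℝ) (hx : x ∈ X) (i j : Fin n) :
    inducedMetric (fun u v => D u * D v * k u v) i j x =
      D x ^ 2 * inducedMetric k i j x
        + pderiv' D i x * pderiv' D j x * k x x
        + D x * (pderiv' D i x * pderivFst k j x x
            + pderiv' D j x * pderivFst k i x x) := by
  set F : ((Fin n → ℝ) × (Fin n → ℝ)) → ℝ := fun p => k p.1 p.2 with hF
  set ei : Fin n → ℝ := (Pi.single i 1 : Fin n → ℝ) with hei
  set ej : Fin n → ℝ := (Pi.single j 1 : Fin n → ℝ) with hej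
  have hU : IsOpen (X ×ˢ X) := hX.prod hX
  have hmem : (x, x) ∈ X ×ˢ X := ⟨hx, hx⟩
  have hF2 : ContDiffAt ℝ 2 F (x, x) := hk.contDiffAt (hU.mem_nhds hmem)
  have hF1 : ∀ p ∈ X ×ˢ X, DifferentiableAt ℝ F p := fun p hp =>
    (hk.contDiffAt (hU.mem_nhds hp)).differentiableAt (by norm_num)
  -- lines
  have hline : ∀ v : Fin n → ℝ, HasDerivAt (fun t : ℝ => x + t • v) v 0 := by
    intro v
    simpa using (((hasDerivAt_id (0:ℝ)).smul_const v).const_add x)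
  -- derivative of k in first slot
  have hkd : ∀ y ∈ X, ∀ l : Fin n,
      HasDerivAt (fun t : ℝ => k (x + t • (Pi.single l 1 : Fin n → ℝ)) y)
        (fderiv ℝ F (x, y) ((Pi.single l 1 : Fin n → ℝ), 0)) 0 := by
    intro y hy l
    have hFd := (hF1 (x, y) ⟨hx, hy⟩).hasFDerivAt
    rw [show (x, y) = (x + (0:ℝ) • (Pi.single l 1 : Fin n → ℝ), y) from by simp] at hFd
    simpa [Function.comp_def] using
      hFd.comp_hasDerivAt 0 ((hline (Pi.single l 1)).prodMk (hasDerivAt_const 0 y))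
  -- derivative of k in second slot at (x,x)
  have hkd2 : HasDerivAt (fun s : ℝ => k x (x + s • ej))
      (fderiv ℝ F (x, x) (0, ej)) 0 := by
    have hFd := (hF1 (x, x) hmem).hasFDerivAt
    rw [show ((x : Fin n → ℝ), x) = (x, x + (0:ℝ) • ej) from by simp] at hFd
    simpa [Function.comp_def] using
      hFd.comp_hasDerivAt 0 ((hasDerivAt_const 0 x).prodMk (hline ej))
  set b : ℝ := fderiv ℝ F (x, x) (0, ej) with hb
  set G : (Fin n → ℝ) → ℝ := fun y => fderiv ℝ F (x, y) (ei, 0) with hG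
  have hfC : ContDiffAt ℝ 1 (fderiv ℝ F) (x, x) := hF2.fderiv_right (by norm_num)
  have hfd : DifferentiableAt ℝ (fderiv ℝ F) (x, x) := hfC.differentiableAt (by norm_num)
  have hyx : DifferentiableAt ℝ (fun y => fderiv ℝ F (x, y)) x :=
    hfd.comp x ((differentiableAt_const x).prodMk differentiableAt_id)
  have hGdiff : DifferentiableAt ℝ G x := hyx.clm_apply (differentiableAt_const _)
  have hGline : HasDerivAt (fun s : ℝ => G (x + s • ej)) (fderiv ℝ G x ej) 0 := by
    have hFd := hGdiff.hasFDerivAt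
    rw [show x = x + (0:ℝ) • ej from by simp] at hFd
    simpa [Function.comp_def] using hFd.comp_hasDerivAt 0 (hline ej)
  set c : ℝ := fderiv ℝ G x ej with hc
  -- D derivatives
  have hDx : DifferentiableAt ℝ D x :=
    (hD.contDiffAt (hX.mem_nhds hx)).differentiableAt (by norm_num)
  have hDline : ∀ v : Fin n → ℝ,
      HasDerivAt (fun t : ℝ => D (x + t • v)) (fderiv ℝ D x v) 0 := by
    intro v
    have hFd := hDx.hasFDerivAt
    rw [show x = x + (0:ℝ) • v from by simp] at hFd
    simpa [Function.comp_def] using hFd.comp_hasDerivAt 0 (hline v)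
  have hDi := hDline ei
  have hDj := hDline ej
  set Di : ℝ := fderiv ℝ D x ei with hDi'
  set Dj : ℝ := fderiv ℝ D x ej with hDj'
  have hpDi : pderiv' D i x = Di := by
    rw [pderiv', ← hei]; exact hDi.deriv
  have hpDj : pderiv' D j x = Dj := by
    rw [pderiv', ← hej]; exact hDj.deriv
  -- eventually in X
  have hev : ∀ᶠ s : ℝ in nhds 0, x + s • ej ∈ X := by
    have hcont : ContinuousAt (fun s : ℝ => x + s • ej) 0 := by fun_prop
    exact hcont.preimage_mem_nhds (by simpa using hX.mem_nhds hx)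
  -- pderivFst of conformal kernel
  have hconf : ∀ y ∈ X,
      pderivFst (fun u v => D u * D v * k u v) i x y
        = Di * D y * k x y + D x * D y * G y := by
    intro y hy
    have h1 : HasDerivAt (fun t : ℝ => D (x + t • ei) * D y) (Di * D y) 0 :=
      hDi.mul_const (D y)
    have h2 := hkd y hy i
    rw [← hei] at h2
    have h4 := (h1.mul h2).deriv
    simp only [zero_smul, add_zero, Pi.mul_def] at h4
    rw [pderivFst, ← hei, h4, hG]
  -- identifications
  have hGx : pderivFst k i x x = G x := by
    rw [pderivFst, (hkd x hx i).deriv, hG, hei]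
  have hbx : pderivFst k j x x = b := by
    have hsy : (fun s : ℝ => k (x + s • ej) x) =ᶠ[nhds 0]
        (fun s : ℝ => k x (x + s • ej)) :=
      hev.mono fun s hs => hsymm _ hs x hx
    rw [pderivFst, ← hej, hsy.deriv_eq, hkd2.deriv]
  have hcx : inducedMetric k i j x = c := by
    have heq2 : (fun s : ℝ => pderivFst k i x (x + s • ej)) =ᶠ[nhds 0]
        (fun s : ℝ => G (x + s • ej)) := by
      refine hev.mono fun s hs => ?_
      simpa [pderivFst, hG, hei] using (hkd _ hs i).deriv
    rw [inducedMetric, ← hej, heq2.deriv_eq, hGline.deriv]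
  -- main computation
  have heq : (fun s : ℝ => pderivFst (fun u v => D u * D v * k u v) i x (x + s • ej))
      =ᶠ[nhds 0] (fun s : ℝ => Di * D (x + s • ej) * k x (x + s • ej)
        + D x * D (x + s • ej) * G (x + s • ej)) :=
    hev.mono fun s hs => hconf _ hs
  have hA := ((hDj.const_mul Di).mul hkd2)
  have hB := ((hDj.const_mul (D x)).mul hGline)
  have hAB := (hA.add hB).deriv
  simp only [zero_smul, add_zero] at hAB
  have hmain : inducedMetric (fun u v => D u * D v * k u v) i j x
      = Di * Dj * k x x + Di * D x * b + (D x * Dj * G x + D x * D x * c) := by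
    rw [inducedMetric, ← hej, heq.deriv_eq]
    convert hAB using 2; rfl
  rw [hmain, hcx, hGx, hbx, hpDi, hpDj]; ring
end

section
/- Let X ⊆ ℝⁿ be open, let k : X × X → ℝ be a symmetric C² kernel satisfying k(x,x) = 1 for all x ∈ X and ∂k(x,y)/∂x_i |_{y=x} = 0 for all x ∈ X and all i, and let D : X → ℝ be C¹. Then the metric induced by the conformally transformed kernel k̃(x,y) = D(x)·D(y)·k(x,y) is g̃_ij(x) = D(x)²·g_ij(x) + D_i(x)·D_j(x), where g_ij(x) = ∂²k(x,y)/∂x_i ∂y_j |_{y=x} and D_i(x) = ∂D/∂x_i (x). -/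
/-- For a symmetric `C²` kernel `k` on an open set `X ⊆ ℝⁿ`
with `k(x,x) = 1` and vanishing first partial derivatives on the diagonal, and a
`C¹` function `D`, the metric induced by the conformally transformed kernel
`k̃(x,y) = D(x)D(y)k(x,y)` is `g̃_ij(x) = D(x)²g_ij(x) + D_i(x)D_j(x)`. -/
theorem conformal_inducedMetric_of_diag_one {n : ℕ} (X : Set (Fin n → ℝ))
    (hX : IsOpen X) (k : (Fin n → ℝ) → (Fin n → ℝ) → ℝ) (D : (Fin n → ℝ) → ℝ)
    (hsymm : ∀ x ∈ X, ∀ y ∈ X, k x y = k y x)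
    (hk : ContDiffOn ℝ 2 (fun p : (Fin n → ℝ) × (Fin n → ℝ) => k p.1 p.2) (X ×ˢ X))
    (hdiag : ∀ x ∈ X, k x x = 1)
    (hfd : ∀ x ∈ X, ∀ i : Fin n, pderivFst k i x x = 0)
    (hD : ContDiffOn ℝ 1 D X) (x : Fin n → ℝ) (hx : x ∈ X) (i j : Fin n) :
    inducedMetric (fun u v => D u * D v * k u v) i j x =
      D x ^ 2 * inducedMetric k i j x + pderiv' D i x * pderiv' D j x := by
  have hXX : IsOpen (X ×ˢ X) := hX.prod hX
  set K : (Fin n → ℝ) × (Fin n → ℝ) → ℝ := fun p => k p.1 p.2 with hKdef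
  set ei : Fin n → ℝ := Pi.single i 1 with heidef
  set ej : Fin n → ℝ := Pi.single j 1 with hejdef
  have hkAt : ∀ p ∈ X ×ˢ X, ContDiffAt ℝ 2 K p := fun p hp =>
    hk.contDiffAt (hXX.mem_nhds hp)
  -- generic directional derivative of K
  have key : ∀ p ∈ X ×ˢ X, ∀ v : (Fin n → ℝ) × (Fin n → ℝ),
      HasDerivAt (fun t : ℝ => K (p + t • v)) (fderiv ℝ K p v) 0 := by
    intro p hp v
    have h1 : HasDerivAt (fun t : ℝ => p + t • v) v 0 := by
      simpa using ((hasDerivAt_id (0:ℝ)).smul_const v).const_add p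
    have h2 : HasFDerivAt K (fderiv ℝ K p) ((fun t : ℝ => p + t • v) 0) := by
      simpa using ((hkAt p hp).differentiableAt (by norm_num)).hasFDerivAt
    exact h2.comp_hasDerivAt 0 h1
  -- derivative in x-direction e_i of k(·, y)
  have hA : ∀ y ∈ X, HasDerivAt (fun t : ℝ => k (x + t • ei) y)
      (fderiv ℝ K (x, y) (ei, 0)) 0 := by
    intro y hy
    have := key (x, y) ⟨hx, hy⟩ (ei, 0)
    simpa [hKdef, Prod.smul_mk, Prod.mk_add_mk] using this
  have hAval : ∀ y ∈ X, pderivFst k i x y = fderiv ℝ K (x, y) (ei, 0) := by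
    intro y hy
    rw [pderivFst, ← heidef]
    exact (hA y hy).deriv
  -- e_j direction, first slot, at (x,x)
  have hAj : HasDerivAt (fun t : ℝ => k (x + t • ej) x)
      (fderiv ℝ K (x, x) (ej, 0)) 0 := by
    have := key (x, x) ⟨hx, hx⟩ (ej, 0)
    simpa [hKdef, Prod.smul_mk, Prod.mk_add_mk] using this
  have hAjval : fderiv ℝ K (x, x) (ej, 0) = 0 := by
    have h1 := hAj.deriv
    have h2 := hfd x hx j
    rw [pderivFst, ← hejdef] at h2
    rw [h1] at h2
    exact h2
  -- membership of the line in X near 0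
  have hmem : ∀ᶠ s : ℝ in nhds (0:ℝ), x + s • ej ∈ X := by
    have hc : ContinuousAt (fun s : ℝ => x + s • ej) 0 := by fun_prop
    have hmem0 : X ∈ nhds ((fun s : ℝ => x + s • ej) 0) := by
      simpa using hX.mem_nhds hx
    exact hc.eventually_mem hmem0
  -- derivative of s ↦ k x (x + s•ej) is 0
  have hky : HasDerivAt (fun s : ℝ => k x (x + s • ej)) 0 0 := by
    have heq : (fun s : ℝ => k x (x + s • ej)) =ᶠ[nhds (0:ℝ)]
        (fun s : ℝ => k (x + s • ej) x) := by
      filter_upwards [hmem] with s hs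
      exact hsymm x hx _ hs
    have h0 := hAj
    rw [hAjval] at h0
    exact h0.congr_of_eventuallyEq heq
  -- D derivatives
  have hDx : DifferentiableAt ℝ D x :=
    (hD.contDiffAt (hX.mem_nhds hx)).differentiableAt one_ne_zero
  set di := fderiv ℝ D x ei with hdidef
  set dj := fderiv ℝ D x ej with hdjdef
  have lineD : ∀ w : Fin n → ℝ, HasDerivAt (fun t : ℝ => D (x + t • w))
      (fderiv ℝ D x w) 0 := by
    intro w
    have h1 : HasDerivAt (fun t : ℝ => x + t • w) w 0 := by
      simpa using ((hasDerivAt_id (0:ℝ)).smul_const w).const_add x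
    have h2 : HasFDerivAt D (fderiv ℝ D x) ((fun t : ℝ => x + t • w) 0) := by
      simpa using hDx.hasFDerivAt
    exact h2.comp_hasDerivAt 0 h1
  have hDi : HasDerivAt (fun t : ℝ => D (x + t • ei)) di 0 := lineD ei
  have hDj : HasDerivAt (fun s : ℝ => D (x + s • ej)) dj 0 := lineD ej
  have hpdi : pderiv' D i x = di := by rw [pderiv', ← heidef]; exact hDi.deriv
  have hpdj : pderiv' D j x = dj := by rw [pderiv', ← hejdef]; exact hDj.deriv
  -- differentiability of Φ : s ↦ fderiv K (x, x+s•ej) (ei,0)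
  set Φ : ℝ → ℝ := fun s =>
    fderiv ℝ K (x, x + s • ej) ((ei, 0) : (Fin n → ℝ) × (Fin n → ℝ)) with hΦdef
  have hfC : ContDiffAt ℝ 1 (fderiv ℝ K) (x, x) :=
    (hkAt (x, x) ⟨hx, hx⟩).fderiv_right (by norm_num)
  have hΦdiff : DifferentiableAt ℝ Φ 0 := by
    have hp : DifferentiableAt ℝ
        (fun y : Fin n → ℝ => ((x, y) : (Fin n → ℝ) × (Fin n → ℝ))) x := by fun_prop
    have h2 : DifferentiableAt ℝ (fun y : Fin n → ℝ => fderiv ℝ K (x, y)) x :=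
      (hfC.differentiableAt one_ne_zero).comp x hp
    have h3 : DifferentiableAt ℝ (fun y : Fin n → ℝ =>
        fderiv ℝ K (x, y) ((ei, 0) : (Fin n → ℝ) × (Fin n → ℝ))) x :=
      h2.clm_apply (differentiableAt_const _)
    have h4 : DifferentiableAt ℝ (fun s : ℝ => x + s • ej) 0 := by fun_prop
    have h3' : DifferentiableAt ℝ (fun y : Fin n → ℝ =>
        fderiv ℝ K (x, y) ((ei, 0) : (Fin n → ℝ) × (Fin n → ℝ)))
        ((fun s : ℝ => x + s • ej) 0) := by simpa using h3
    exact h3'.comp 0 h4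
  set c := deriv Φ 0 with hcdef
  have hΦ : HasDerivAt Φ c 0 := hΦdiff.hasDerivAt
  have hΦ0 : Φ 0 = 0 := by
    have h1 : Φ 0 = fderiv ℝ K (x, x) ((ei, 0) : (Fin n → ℝ) × (Fin n → ℝ)) := by
      rw [hΦdef]; norm_num
    rw [h1, ← hAval x hx]
    exact hfd x hx i
  -- inducedMetric k i j x = c
  have hgval : inducedMetric k i j x = c := by
    have heqF : (fun s : ℝ => pderivFst k i x (x + s • ej)) =ᶠ[nhds (0:ℝ)] Φ := by
      filter_upwards [hmem] with s hs
      exact hAval _ hs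
    rw [inducedMetric, ← hejdef, hcdef]
    exact heqF.deriv_eq
  -- value of pderivFst of the transformed kernel
  have hBval : ∀ y ∈ X, pderivFst (fun u v => D u * D v * k u v) i x y
      = di * D y * k x y
        + D x * D y * fderiv ℝ K (x, y) ((ei, 0) : (Fin n → ℝ) × (Fin n → ℝ)) := by
    intro y hy
    have h := ((hDi.mul_const (D y)).mul (hA y hy)).deriv
    rw [pderivFst, ← heidef]
    simpa only [zero_smul, add_zero, Pi.mul_def] using h
  -- assemble the outer derivative
  have heqG : (fun s : ℝ => pderivFst (fun u v => D u * D v * k u v) i x (x + s • ej))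
      =ᶠ[nhds (0:ℝ)] (fun s : ℝ => di * D (x + s • ej) * k x (x + s • ej)
        + D x * D (x + s • ej) * Φ s) := by
    filter_upwards [hmem] with s hs
    exact hBval _ hs
  have hT1 : HasDerivAt (fun s : ℝ => di * D (x + s • ej) * k x (x + s • ej))
      ((di * dj) * k x (x + (0:ℝ) • ej) + (di * D (x + (0:ℝ) • ej)) * 0) 0 :=
    (hDj.const_mul di).mul hky
  have hT2 : HasDerivAt (fun s : ℝ => D x * D (x + s • ej) * Φ s)
      ((D x * dj) * Φ 0 + (D x * D (x + (0:ℝ) • ej)) * c) 0 :=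
    (hDj.const_mul (D x)).mul hΦ
  have hG := (hT1.add hT2).congr_of_eventuallyEq heqG
  rw [inducedMetric, ← hejdef, hG.deriv, hgval, hpdi, hpdj]
  simp only [zero_smul, add_zero, hΦ0, hdiag x hx]
  ring
end
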